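/- arXiv:1412.2246 — 3 statements merged into one kernel-verified Lean document; each statement's English description precedes it below -/
import Mathlib

section
/- Let E be a finite-dimensional normed vector space over a complete ultrametric field K, f : E → E a bijective analytic map with analytic inverse, p a fixed point of f, and α := f'(p). If a ∈ (0,1] and (0,a] ∩ R(α) = ∅, then W_a^s(f,p) = {p}. -/
open Filter Topology

open scoped TensorProduct

/-- `(E_K̄)_ρ`: the sum of the generalized eigenspaces of `α ⊗ id` on `K̄ ⊗ E`
for the eigenvalues `μ ∈ K̄` with `v μ = ρ`. -/
noncomputable def genEigSum {K : Type*} [NontriviallyNormedField K]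
    {E : Type*} [AddCommGroup E] [Module K E] (α : E →ₗ[K] E)
    (Kbar : Type*) [Field Kbar] [Algebra K Kbar]
    (v : AbsoluteValue Kbar ℝ) (ρ : ℝ) : Submodule Kbar (Kbar ⊗[K] E) :=
  ⨆ (μ : Kbar) (_ : v μ = ρ), Module.End.maxGenEigenspace (α.baseChange Kbar) μ

/-- `E_ρ := (E_K̄)_ρ ∩ E`, identifying `E` with `E ⊗ 1 ⊆ K̄ ⊗ E`. -/
noncomputable def eRho {K : Type*} [NontriviallyNormedField K]
    {E : Type*} [AddCommGroup E] [Module K E] (α : E →ₗ[K] E)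
    (Kbar : Type*) [Field Kbar] [Algebra K Kbar]
    (v : AbsoluteValue Kbar ℝ) (ρ : ℝ) : Submodule K E :=
  ((genEigSum α Kbar v ρ).restrictScalars K).comap (TensorProduct.mk K Kbar E 1)

/-- `R(α)`: the set of absolute values of the eigenvalues of `α ⊗ id` in `K̄`. -/
def rSet {K : Type*} [NontriviallyNormedField K]
    {E : Type*} [AddCommGroup E] [Module K E] (α : E →ₗ[K] E)
    (Kbar : Type*) [Field Kbar] [Algebra K Kbar]
    (v : AbsoluteValue Kbar ℝ) : Set ℝ :=
  {r | ∃ μ : Kbar, Module.End.HasEigenvalue (α.baseChange Kbar) μ ∧ v μ = r}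

/-- The `a`-stable set `W_a^s(f,p)`: points whose forward orbit converges to `p` with
`a^{-n}·‖f^[n] x − p‖ → 0`. -/
def WStable {E : Type*} [NormedAddCommGroup E] (f : E → E) (p : E) (a : ℝ) : Set E :=
  {x | Tendsto (fun n => f^[n] x) atTop (𝓝 p) ∧
    Tendsto (fun n => (a ^ n)⁻¹ * ‖f^[n] x - p‖) atTop (𝓝 (0 : ℝ))}



open Polynomial

/-- An absolute value on a `K`-algebra extending an ultrametric norm is nonarchimedean. -/
lemma abs_add_le_max_aux {K : Type*} [NontriviallyNormedField K] [IsUltrametricDist K]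
    {Kbar : Type*} [Field Kbar] [Algebra K Kbar]
    (v : AbsoluteValue Kbar ℝ) (hv : ∀ x : K, v (algebraMap K Kbar x) = ‖x‖) :
    ∀ x y : Kbar, v (x + y) ≤ max (v x) (v y) := by
  letI : NormedField Kbar := v.toNormedField
  have hn : ∀ z : Kbar, ‖z‖ = v z := fun z => rfl
  have : IsUltrametricDist Kbar := by
    refine IsUltrametricDist.isUltrametricDist_of_forall_norm_natCast_le_one (fun n => ?_)
    have h1 : ((n : Kbar)) = algebraMap K Kbar (n : K) := by
      simp [map_natCast]
    rw [hn, h1, hv]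
    exact IsUltrametricDist.norm_natCast_le_one K n
  intro x y
  simpa [hn] using IsUltrametricDist.norm_add_le_max x y

lemma eval_charpoly_aux {n : Type*} [Fintype n] [DecidableEq n] {R : Type*} [CommRing R]
    (M : Matrix n n R) (μ : R) :
    M.charpoly.eval μ = (μ • (1 : Matrix n n R) - M).det := by
  rw [Matrix.charpoly, _root_.eval_det, Matrix.matPolyEquiv_charmatrix]
  simp only [Polynomial.eval_sub, Polynomial.eval_X, Polynomial.eval_C]
  congr 1
  ext i j
  simp [Matrix.scalar, Matrix.one_apply, Matrix.diagonal, Matrix.smul_apply]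

lemma hasEigenvalue_of_isRoot_charpoly_aux {F : Type*} [Field F] {V : Type*} [AddCommGroup V]
    [Module F V] [FiniteDimensional F V] (g : Module.End F V) (μ : F)
    (h : g.charpoly.IsRoot μ) : Module.End.HasEigenvalue g μ := by
  classical
  let b := Module.finBasis F V
  have hdet : LinearMap.det (μ • (1 : Module.End F V) - g) = 0 := by
    rw [← LinearMap.det_toMatrix b]
    have : (LinearMap.toMatrix b b) (μ • (1 : Module.End F V) - g)
        = μ • (1 : Matrix _ _ F) - LinearMap.toMatrix b b g := by
      simp [map_sub, map_smul, LinearMap.toMatrix_one]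
    rw [this, ← eval_charpoly_aux, LinearMap.charpoly_toMatrix]
    exact h
  have hker := LinearMap.bot_lt_ker_of_det_eq_zero hdet
  obtain ⟨x, hx, hx0⟩ := (Submodule.ne_bot_iff _).mp hker.ne'
  refine Module.End.hasEigenvalue_of_hasEigenvector ⟨?_, hx0⟩
  rw [Module.End.mem_eigenspace_iff]
  have := hx
  simp only [LinearMap.mem_ker, LinearMap.sub_apply, LinearMap.smul_apply,
    Module.End.one_apply] at this
  rw [sub_eq_zero] at this
  exact this.symm
open Polynomial

lemma coeff_prod_le_aux {Kbar : Type*} [Field Kbar]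
    (v : AbsoluteValue Kbar ℝ) (hna : ∀ x y : Kbar, v (x + y) ≤ max (v x) (v y))
    {u : ℝ} (hu0 : 0 ≤ u) :
    ∀ (s : Multiset Kbar), (∀ μ ∈ s, v μ ≤ u) → ∀ k ≤ Multiset.card s,
      v (((s.map fun μ => X - C μ).prod).coeff k) ≤ u ^ (Multiset.card s - k) := by
  have hsub : ∀ x y : Kbar, v (x - y) ≤ max (v x) (v y) := by
    intro x y
    simpa [sub_eq_add_neg] using hna x (-y)
  intro s
  induction s using Multiset.induction_on with
  | empty =>
    intro _ k hk
    simp only [Multiset.card_zero, Nat.le_zero] at hk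
    subst hk
    simp
  | cons μ t IH =>
    intro hall k hk
    have hμ : v μ ≤ u := hall μ (Multiset.mem_cons_self μ t)
    have ht : ∀ ν ∈ t, v ν ≤ u := fun ν hν => hall ν (Multiset.mem_cons_of_mem hν)
    set q : Kbar[X] := ((t.map fun μ => X - C μ).prod) with hq
    have hdeg : q.natDegree = Multiset.card t := by
      rw [hq]
      exact natDegree_multiset_prod_X_sub_C_eq_card t
    have hprod : ((μ ::ₘ t).map fun μ => X - C μ).prod = (X - C μ) * q := by
      rw [Multiset.map_cons, Multiset.prod_cons]
    rw [hprod]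
    have hexp : (X - C μ) * q = X * q - C μ * q := by ring
    rw [hexp]
    have hcard : Multiset.card (μ ::ₘ t) = Multiset.card t + 1 := by simp
    rw [hcard] at hk ⊢
    rcases Nat.eq_zero_or_pos k with rfl | hkpos
    · rw [coeff_sub, coeff_C_mul, mul_coeff_zero, coeff_X_zero, zero_mul, zero_sub,
        AbsoluteValue.map_neg, AbsoluteValue.map_mul]
      have := IH ht 0 (Nat.zero_le _)
      calc v μ * v (q.coeff 0) ≤ u * u ^ (Multiset.card t - 0) :=
            mul_le_mul hμ this (v.nonneg _) hu0
        _ = u ^ (Multiset.card t + 1 - 0) := by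
            rw [Nat.sub_zero, Nat.sub_zero, ← pow_succ']
    · obtain ⟨j, rfl⟩ := Nat.exists_eq_add_of_lt hkpos
      rw [zero_add] at hk ⊢
      rw [coeff_sub, coeff_C_mul, coeff_X_mul]
      refine le_trans (hsub _ _) (max_le ?_ ?_)
      · have := IH ht j (by omega)
        calc v (q.coeff j) ≤ u ^ (Multiset.card t - j) := this
          _ = u ^ (Multiset.card t + 1 - (j + 1)) := by congr 1; omega
      · rcases le_or_gt (j + 1) (Multiset.card t) with hj | hj
        · rw [AbsoluteValue.map_mul]
          have := IH ht (j + 1) hj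
          calc v μ * v (q.coeff (j + 1)) ≤ u * u ^ (Multiset.card t - (j + 1)) :=
                mul_le_mul hμ this (v.nonneg _) hu0
            _ = u ^ (Multiset.card t + 1 - (j + 1)) := by
                rw [← pow_succ']; congr 1; omega
        · have : q.coeff (j + 1) = 0 := coeff_eq_zero_of_natDegree_lt (by omega)
          rw [this, mul_zero, AbsoluteValue.map_zero]
          positivity

open Filter Topology
open scoped TensorProduct

open Filter Topology
open scoped TensorProduct

set_option maxHeartbeats 2000000 in
private theorem main_aux
    {K : Type*} [NontriviallyNormedField K] [IsUltrametricDist K] [CompleteSpace K]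
    {E : Type*} [NormedAddCommGroup E] [NormedSpace K E] [FiniteDimensional K E]
    {f g : E → E} (hf : AnalyticOnNhd K f Set.univ) (hg : AnalyticOnNhd K g Set.univ)
    (hgf : Function.LeftInverse g f) (hfg : Function.RightInverse g f)
    {p : E} (hfp : f p = p)
    (α : E →L[K] E) (hα : HasFDerivAt f α p)
    {Kbar : Type*} [Field Kbar] [Algebra K Kbar] [IsAlgClosure K Kbar]
    (v : AbsoluteValue Kbar ℝ) (hv : ∀ x : K, v (algebraMap K Kbar x) = ‖x‖)
    {a : ℝ} (ha : 0 < a) (ha1 : a ≤ 1)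
    (hR : ∀ r ∈ Set.Ioc (0 : ℝ) a, r ∉ rSet (α : E →ₗ[K] E) Kbar v) :
    WStable f p a = {p} := by
  classical
  have hpmem : p ∈ WStable f p a := by
    constructor
    · simp [Function.iterate_fixed hfp]
    · simp [Function.iterate_fixed hfp]
  -- trivial case `E = 0`
  rcases Nat.eq_zero_or_pos (Module.finrank K E) with hn0 | hnpos
  · have : Subsingleton E := by
      rw [← Module.finrank_zero_iff (R := K)]; exact hn0
    ext x
    simp only [Set.mem_singleton_iff]
    constructor
    · intro _; exact Subsingleton.elim x p
    · rintro rfl; exact hpmem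
  set n := Module.finrank K E with hn
  -- the inverse derivative
  have hgd : DifferentiableAt K g p := (hg p trivial).differentiableAt
  set B : E →L[K] E := fderiv K g p with hBdef
  have hB : HasFDerivAt g B p := hgd.hasFDerivAt
  have hBf : HasFDerivAt g B (f p) := by rwa [hfp]
  have hgp : g p = p := by conv_lhs => rw [← hfp]; rw [hgf p]
  have hαg : HasFDerivAt f α (g p) := by rwa [hgp]
  have hcomp1 : HasFDerivAt (g ∘ f) (B.comp α) p := hBf.comp p hα
  have hcomp2 : HasFDerivAt (f ∘ g) (α.comp B) p := hαg.comp p hB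
  have hid1 : B.comp α = ContinuousLinearMap.id K E := by
    have h1 : (g ∘ f) = id := funext hgf
    have : HasFDerivAt (id : E → E) (B.comp α) p := h1 ▸ hcomp1
    exact this.unique (hasFDerivAt_id p)
  have hid2 : α.comp B = ContinuousLinearMap.id K E := by
    have h1 : (f ∘ g) = id := funext hfg
    have : HasFDerivAt (id : E → E) (α.comp B) p := h1 ▸ hcomp2
    exact this.unique (hasFDerivAt_id p)
  set bl : E →ₗ[K] E := (B : E →ₗ[K] E) with hbl
  have hBα : ∀ z, bl (α z) = z := fun z => congrArg (fun φ => φ z) hid1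
  have hαB : ∀ z, α (bl z) = z := fun z => congrArg (fun φ => φ z) hid2
  -- the characteristic polynomial of the inverse and its roots
  set χ : Polynomial K := LinearMap.charpoly bl with hχ
  have hmonic : χ.Monic := LinearMap.charpoly_monic bl
  have hdeg : χ.natDegree = n := bl.charpoly_natDegree
  set χbar : Polynomial Kbar := χ.map (algebraMap K Kbar) with hχbar
  have hmonicbar : χbar.Monic := hmonic.map _
  have hdegbar : χbar.natDegree = n := by
    rw [hχbar, Polynomial.natDegree_map, hdeg]
  haveI : IsAlgClosed Kbar := IsAlgClosure.isAlgClosed (R := K)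
  have hsplit : χbar.Splits :=
    IsAlgClosed.splits _
  have hcard : Multiset.card χbar.roots = n := by
    rw [Polynomial.splits_iff_card_roots.mp hsplit, hdegbar]
  have hprodroots : ((χbar.roots.map fun μ => Polynomial.X - Polynomial.C μ).prod) = χbar :=
    Polynomial.prod_multiset_X_sub_C_of_monic_of_roots_card_eq hmonicbar
      (by rw [hcard, hdegbar])
  -- every root of `χbar` has absolute value < a⁻¹
  have hroot : ∀ μ ∈ χbar.roots, v μ < a⁻¹ := by
    intro μ hμ
    have hroot' : χbar.IsRoot μ := Polynomial.isRoot_of_mem_roots hμ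
    have hbase : ((bl.baseChange Kbar).charpoly) = χbar := by
      rw [LinearMap.charpoly_baseChange, hχbar]
    have hev : Module.End.HasEigenvalue (bl.baseChange Kbar) μ :=
      hasEigenvalue_of_isRoot_charpoly_aux _ μ (by rw [hbase]; exact hroot')
    obtain ⟨x, hxmem, hx0⟩ := hev.exists_hasEigenvector
    have hxeq : (bl.baseChange Kbar) x = μ • x := Module.End.mem_eigenspace_iff.mp hxmem
    have hcompid : ((α : E →ₗ[K] E).baseChange Kbar).comp (bl.baseChange Kbar)
        = LinearMap.id := by
      rw [← LinearMap.baseChange_comp]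
      have : (α : E →ₗ[K] E).comp bl = LinearMap.id := by
        ext z; exact hαB z
      rw [this, LinearMap.baseChange_id]
    have hx : ((α : E →ₗ[K] E).baseChange Kbar) ((bl.baseChange Kbar) x) = x :=
      congrArg (fun φ => φ x) hcompid
    rw [hxeq, map_smul] at hx
    have hμ0 : μ ≠ 0 := by
      rintro rfl
      rw [zero_smul] at hx
      exact hx0 hx.symm
    have hαx : ((α : E →ₗ[K] E).baseChange Kbar) x = μ⁻¹ • x := by
      have h2 := congrArg (fun z => μ⁻¹ • z) hx
      simp only [smul_smul, inv_mul_cancel₀ hμ0, one_smul] at h2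
      exact h2
    have hevα : Module.End.HasEigenvalue ((α : E →ₗ[K] E).baseChange Kbar) μ⁻¹ :=
      Module.End.hasEigenvalue_of_hasEigenvector ⟨Module.End.mem_eigenspace_iff.mpr hαx, hx0⟩
    have hmem : v μ⁻¹ ∈ rSet (α : E →ₗ[K] E) Kbar v := ⟨μ⁻¹, hevα, rfl⟩
    have hvμ : 0 < v μ := v.pos hμ0
    have hvinv : v μ⁻¹ = (v μ)⁻¹ := map_inv₀ v μ
    have hnot : v μ⁻¹ ∉ Set.Ioc (0:ℝ) a := fun hc => hR _ hc hmem
    rw [hvinv] at hnot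
    have : a < (v μ)⁻¹ := by
      by_contra hcon
      push_neg at hcon
      exact hnot ⟨inv_pos.mpr hvμ, hcon⟩
    calc v μ = ((v μ)⁻¹)⁻¹ := by rw [inv_inv]
      _ < a⁻¹ := by
          apply inv_strictAnti₀ ha this
  -- an ultrametric norm on `E` via a basis
  haveI instU : IsUltrametricDist (Fin n → K) := by
    refine IsUltrametricDist.isUltrametricDist_of_forall_norm_add_le_max_norm (fun x y => ?_)
    refine (pi_norm_le_iff_of_nonneg (le_max_of_le_left (norm_nonneg _))).mpr fun i => ?_
    calc ‖(x + y) i‖ = ‖x i + y i‖ := rfl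
      _ ≤ max ‖x i‖ ‖y i‖ := IsUltrametricDist.norm_add_le_max _ _
      _ ≤ max ‖x‖ ‖y‖ := max_le_max (norm_le_pi_norm x i) (norm_le_pi_norm y i)
  set φ : E ≃L[K] (Fin n → K) := (Module.finBasis K E).equivFunL with hφdef
  set ν : E → ℝ := fun x => ‖φ x‖ with hνdef
  have hν0 : ∀ x, 0 ≤ ν x := fun x => norm_nonneg _
  have hνadd : ∀ x y, ν (x + y) ≤ ν x + ν y := by
    intro x y
    simp only [hνdef, map_add]
    exact norm_add_le _ _
  have hνpos : ∀ x : E, x ≠ 0 → 0 < ν x := by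
    intro x hx
    simp only [hνdef]
    rw [norm_pos_iff]
    intro hc
    exact hx (by simpa using congrArg φ.symm hc)
  set Dk : ℕ → ℝ := fun k => ‖(φ.toContinuousLinearMap.comp
    ((LinearMap.toContinuousLinearMap (bl ^ k)).comp φ.symm.toContinuousLinearMap))‖ with hDkdef
  have hDk : ∀ k x, ν ((bl ^ k) x) ≤ Dk k * ν x := by
    intro k x
    have h1 : ν ((bl ^ k) x) = ‖(φ.toContinuousLinearMap.comp
        ((LinearMap.toContinuousLinearMap (bl ^ k)).comp φ.symm.toContinuousLinearMap)) (φ x)‖ := by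
      simp [hνdef]
    rw [h1]
    exact (φ.toContinuousLinearMap.comp _).le_opNorm _
  -- the maximal root absolute value
  have hSne : χbar.roots.toFinset.Nonempty := by
    rw [Multiset.toFinset_nonempty]
    intro hroots0
    have hzn : (0:ℕ) = n := by rw [← hcard, hroots0, Multiset.card_zero]
    omega
  set u : ℝ := χbar.roots.toFinset.sup' hSne v with hu
  have hu_lt : u < a⁻¹ :=
    (Finset.sup'_lt_iff hSne).mpr fun μ hμ => hroot μ (Multiset.mem_toFinset.mp hμ)
  have hu_ge : ∀ μ ∈ χbar.roots, v μ ≤ u :=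
    fun μ h => Finset.le_sup' v (Multiset.mem_toFinset.mpr h)
  set w : ℝ := max u (a / 2) with hwdef
  have hw0 : 0 < w := lt_max_of_lt_right (half_pos ha)
  have hainv : (1:ℝ) ≤ a⁻¹ := by
    rw [le_inv_comm₀ (by norm_num) ha]
    simpa using ha1
  have hwa : w < a⁻¹ := max_lt hu_lt (by linarith)
  -- coefficient bounds
  have hcoef : ∀ k ≤ n, ‖χ.coeff k‖ ≤ w ^ (n - k) := by
    intro k hk
    have h1 : ‖χ.coeff k‖ = v (χbar.coeff k) := by
      rw [hχbar, Polynomial.coeff_map, hv]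
    rw [h1]
    have := coeff_prod_le_aux v (abs_add_le_max_aux v hv) hw0.le χbar.roots
      (fun μ hμ => le_trans (hu_ge μ hμ) (le_max_left _ _)) k (by rw [hcard]; exact hk)
    rwa [hprodroots, hcard] at this
  -- growth bound for powers of the inverse
  have hrangene : (Finset.range n).Nonempty := Finset.nonempty_range_iff.mpr (by omega)
  set D : ℝ := (Finset.range n).sup' hrangene (fun k => Dk k / w ^ k) with hDdef
  have hDle : ∀ k, k < n → Dk k ≤ D * w ^ k := by
    intro k hk
    have h1 : Dk k / w ^ k ≤ D :=
      Finset.le_sup' (fun k => Dk k / w ^ k) (Finset.mem_range.mpr hk)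
    calc Dk k = (Dk k / w ^ k) * w ^ k := by field_simp
      _ ≤ D * w ^ k := mul_le_mul_of_nonneg_right h1 (pow_nonneg hw0.le k)
  have hD0 : 0 ≤ D := by
    refine le_trans ?_ (Finset.le_sup' (fun k => Dk k / w ^ k) (Finset.mem_range.mpr hnpos))
    positivity
  have key : ∀ m : ℕ, ∀ x : E, ν ((bl ^ m) x) ≤ D * w ^ m * ν x := by
    intro m
    induction m using Nat.strong_induction_on with
    | _ m IH =>
      intro x
      rcases lt_or_ge m n with hm | hm
      · calc ν ((bl ^ m) x) ≤ Dk m * ν x := hDk m x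
          _ ≤ D * w ^ m * ν x := mul_le_mul_of_nonneg_right (hDle m hm) (hν0 x)
      · have hCH : Polynomial.aeval bl χ = 0 := LinearMap.aeval_self_charpoly bl
        have hsum : (∑ i ∈ Finset.range (n + 1), χ.coeff i • bl ^ i) = 0 := by
          have h2 := Polynomial.aeval_eq_sum_range (p := χ) bl
          rw [hdeg] at h2
          rw [← h2, hCH]
        set y := (bl ^ (m - n)) x with hy
        have happ' : ∑ i ∈ Finset.range (n + 1), χ.coeff i • ((bl ^ i) y) = 0 := by
          have := congrArg (fun (ψ : E →ₗ[K] E) => ψ y) hsum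
          simpa [LinearMap.sum_apply, LinearMap.smul_apply] using this
        rw [Finset.sum_range_succ] at happ'
        have hcoeffn : χ.coeff n = 1 := by
          have h3 := hmonic.coeff_natDegree
          rwa [hdeg] at h3
        rw [hcoeffn, one_smul] at happ'
        have hblm : (bl ^ n) y = (bl ^ m) x := by
          rw [hy, ← Module.End.mul_apply, ← pow_add, Nat.add_sub_cancel' hm]
        have hexp : (bl ^ m) x = -∑ i ∈ Finset.range n, χ.coeff i • ((bl ^ i) y) := by
          rw [← hblm]
          exact eq_neg_of_add_eq_zero_right happ'
        calc ν ((bl ^ m) x)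
            = ‖∑ i ∈ Finset.range n, φ (χ.coeff i • ((bl ^ i) y))‖ := by
              simp only [hνdef]
              rw [hexp]
              simp only [map_neg, norm_neg, map_sum]
          _ ≤ D * w ^ m * ν x := by
              refine IsUltrametricDist.norm_sum_le_of_forall_le_of_nonneg (by positivity) ?_
              intro i hi
              have hi' : i < n := Finset.mem_range.mp hi
              rw [map_smul, norm_smul]
              have h1 : (bl ^ i) y = (bl ^ (i + (m - n))) x := by
                rw [hy, ← Module.End.mul_apply, ← pow_add]
              have h2 := IH (i + (m - n)) (by omega) x
              have h4 : (0:ℝ) ≤ ν ((bl ^ (i + (m - n))) x) := hν0 _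
              calc ‖χ.coeff i‖ * ‖φ ((bl ^ i) y)‖
                  = ‖χ.coeff i‖ * ν ((bl ^ (i + (m - n))) x) := by
                    rw [h1]
                _ ≤ w ^ (n - i) * (D * w ^ (i + (m - n)) * ν x) :=
                    mul_le_mul (hcoef i hi'.le) h2 h4 (pow_nonneg hw0.le _)
                _ = D * (w ^ (n - i) * w ^ (i + (m - n))) * ν x := by ring
                _ = D * w ^ m * ν x := by
                    rw [← pow_add, show (n - i) + (i + (m - n)) = m from by omega]
  -- the adapted norm
  have haw : a < w⁻¹ := by
    have h1 : a * w < a * a⁻¹ := mul_lt_mul_of_pos_left hwa ha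
    rw [mul_inv_cancel₀ ha.ne'] at h1
    have h2 : 0 < w⁻¹ := inv_pos.mpr hw0
    nlinarith [mul_inv_cancel₀ hw0.ne']
  set t : ℝ := (a + w⁻¹) / 2 with htdef
  have ht0 : 0 < t := by positivity
  have hta : a < t := by rw [htdef]; linarith
  have htw : t < w⁻¹ := by rw [htdef]; linarith
  have htw1 : t * w < 1 := by
    calc t * w < w⁻¹ * w := mul_lt_mul_of_pos_right htw hw0
      _ = 1 := inv_mul_cancel₀ hw0.ne'
  have hterm : ∀ (x : E) (m : ℕ), t ^ m * ν ((bl ^ m) x) ≤ D * ν x := by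
    intro x m
    have h1 : t ^ m * ν ((bl ^ m) x) ≤ t ^ m * (D * w ^ m * ν x) :=
      mul_le_mul_of_nonneg_left (key m x) (pow_nonneg ht0.le m)
    have h2 : t ^ m * (D * w ^ m * ν x) = D * (t * w) ^ m * ν x := by
      rw [mul_pow]; ring
    have h3 : (t * w) ^ m ≤ 1 := pow_le_one₀ (by positivity) htw1.le
    have h4 : D * (t * w) ^ m * ν x ≤ D * 1 * ν x :=
      mul_le_mul_of_nonneg_right (mul_le_mul_of_nonneg_left h3 hD0) (hν0 x)
    linarith
  have hbdd : ∀ x : E, BddAbove (Set.range fun m : ℕ => t ^ m * ν ((bl ^ m) x)) := by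
    intro x
    refine ⟨D * ν x, ?_⟩
    rintro r ⟨m, rfl⟩
    exact hterm x m
  set NN : E → ℝ := fun x => ⨆ m : ℕ, t ^ m * ν ((bl ^ m) x) with hNNdef
  have hNle : ∀ x, NN x ≤ D * ν x := fun x => ciSup_le (hterm x)
  have hN1 : ∀ x, ν x ≤ NN x := by
    intro x
    have := le_ciSup (hbdd x) 0
    simpa using this
  have hN0 : ∀ x, 0 ≤ NN x := fun x => le_trans (hν0 x) (hN1 x)
  have hNadd : ∀ x y, NN (x + y) ≤ NN x + NN y := by
    intro x y
    refine ciSup_le fun m => ?_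
    have h1 : t ^ m * ν ((bl ^ m) (x + y)) ≤ t ^ m * ν ((bl ^ m) x) + t ^ m * ν ((bl ^ m) y) := by
      have h2 : ν ((bl ^ m) (x + y)) ≤ ν ((bl ^ m) x) + ν ((bl ^ m) y) := by
        rw [map_add]; exact hνadd _ _
      nlinarith [pow_nonneg ht0.le m]
    exact le_trans h1 (add_le_add (le_ciSup (hbdd x) m) (le_ciSup (hbdd y) m))
  have hNneg : ∀ x, NN (-x) = NN x := by
    intro x
    have h1 : (fun m : ℕ => t ^ m * ν ((bl ^ m) (-x))) = fun m : ℕ => t ^ m * ν ((bl ^ m) x) := by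
      funext m
      simp [hνdef, map_neg]
    simp only [hNNdef, h1]
  have hNexp : ∀ y, t * NN y ≤ NN (α y) := by
    intro y
    have h1 : NN y ≤ t⁻¹ * NN (α y) := by
      refine ciSup_le fun m => ?_
      have hb : (bl ^ (m + 1)) (α y) = (bl ^ m) y := by
        rw [pow_succ, Module.End.mul_apply, hBα]
      have h2 : t ^ (m + 1) * ν ((bl ^ (m + 1)) (α y)) ≤ NN (α y) := le_ciSup (hbdd (α y)) (m + 1)
      rw [hb] at h2
      have h4 := mul_le_mul_of_nonneg_left h2 (inv_nonneg.mpr ht0.le)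
      calc t ^ m * ν ((bl ^ m) y) = t⁻¹ * (t ^ (m + 1) * ν ((bl ^ m) y)) := by
            rw [pow_succ]; field_simp
        _ ≤ t⁻¹ * NN (α y) := h4
    calc t * NN y ≤ t * (t⁻¹ * NN (α y)) := mul_le_mul_of_nonneg_left h1 ht0.le
      _ = NN (α y) := by field_simp
  -- comparison constants
  set Mp : ℝ := ‖φ.toContinuousLinearMap‖ + 1 with hMpdef
  set Ms : ℝ := ‖φ.symm.toContinuousLinearMap‖ + 1 with hMsdef
  have hMp0 : 0 < Mp := by positivity
  have hMs0 : 0 < Ms := by positivity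
  have hνle : ∀ z : E, ν z ≤ Mp * ‖z‖ := by
    intro z
    calc ν z = ‖φ.toContinuousLinearMap z‖ := rfl
      _ ≤ ‖φ.toContinuousLinearMap‖ * ‖z‖ := (φ.toContinuousLinearMap).le_opNorm z
      _ ≤ Mp * ‖z‖ := mul_le_mul_of_nonneg_right (by rw [hMpdef]; linarith) (norm_nonneg z)
  have hlez : ∀ z : E, ‖z‖ ≤ Ms * ν z := by
    intro z
    calc ‖z‖ = ‖φ.symm.toContinuousLinearMap (φ z)‖ := by simp
      _ ≤ ‖φ.symm.toContinuousLinearMap‖ * ‖φ z‖ := (φ.symm.toContinuousLinearMap).le_opNorm _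
      _ ≤ Ms * ν z := mul_le_mul_of_nonneg_right (by rw [hMsdef]; linarith) (norm_nonneg _)
  set κ : ℝ := (D + 1) * Mp * Ms with hκdef
  have hκ0 : 0 < κ := by positivity
  set t₁ : ℝ := (a + t) / 2 with ht₁def
  have ht₁a : a < t₁ := by rw [ht₁def]; linarith
  have ht₁t : t₁ < t := by rw [ht₁def]; linarith
  have ht₁0 : 0 < t₁ := lt_trans ha ht₁a
  set ε : ℝ := (t - t₁) / κ with hεdef
  have hε0 : 0 < ε := by rw [hεdef]; exact div_pos (by linarith) hκ0
  have hκε : κ * ε = t - t₁ := by rw [hεdef]; field_simp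
  have hlo := hα.isLittleO.def hε0
  obtain ⟨δ, hδ0, hδ⟩ := Metric.eventually_nhds_iff.mp hlo
  -- one-step expansion
  have hstep : ∀ x : E, dist x p < δ → t₁ * NN (x - p) ≤ NN (f x - p) := by
    intro x hx
    have hRb := hδ hx
    rw [hfp] at hRb
    set R : E := f x - p - α (x - p) with hRdef
    have hNR : NN R ≤ (t - t₁) * NN (x - p) := by
      have h5 : ‖R‖ ≤ ε * (Ms * NN (x - p)) := by
        calc ‖R‖ ≤ ε * ‖x - p‖ := hRb
          _ ≤ ε * (Ms * NN (x - p)) := by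
              refine mul_le_mul_of_nonneg_left ?_ hε0.le
              exact le_trans (hlez _) (mul_le_mul_of_nonneg_left (hN1 _) hMs0.le)
      calc NN R ≤ D * ν R := hNle R
        _ ≤ (D + 1) * ν R := mul_le_mul_of_nonneg_right (by linarith) (hν0 R)
        _ ≤ (D + 1) * (Mp * ‖R‖) := mul_le_mul_of_nonneg_left (hνle R) (by linarith)
        _ ≤ (D + 1) * (Mp * (ε * (Ms * NN (x - p)))) := by
            refine mul_le_mul_of_nonneg_left (mul_le_mul_of_nonneg_left h5 hMp0.le) (by linarith)
        _ = κ * ε * NN (x - p) := by rw [hκdef]; ring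
        _ = (t - t₁) * NN (x - p) := by rw [hκε]
    have hsplit : α (x - p) = (f x - p) + (-R) := by
      rw [hRdef]; abel
    have hkey : NN (α (x - p)) ≤ NN (f x - p) + NN R := by
      rw [hsplit]
      exact le_trans (hNadd _ _) (by rw [hNneg])
    have hα' : t * NN (x - p) ≤ NN (α (x - p)) := hNexp (x - p)
    linarith
  -- conclusion
  ext x
  simp only [Set.mem_singleton_iff]
  constructor
  · rintro ⟨h1, h2⟩
    obtain ⟨N₀, hN₀⟩ := (Metric.tendsto_atTop.mp h1) δ hδ0
    by_cases hfix : f^[N₀] x = p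
    · have hinj : Function.Injective f^[N₀] := hgf.injective.iterate N₀
      apply hinj
      rw [hfix, Function.iterate_fixed hfp]
    · exfalso
      have hc0 : 0 < NN (f^[N₀] x - p) :=
        lt_of_lt_of_le (hνpos _ (sub_ne_zero.mpr hfix)) (hN1 _)
      have hiter : ∀ m : ℕ, t₁ ^ m * NN (f^[N₀] x - p) ≤ NN (f^[N₀ + m] x - p) := by
        intro m
        induction m with
        | zero => simp
        | succ m IH =>
          have hd : dist (f^[N₀ + m] x) p < δ := hN₀ _ (Nat.le_add_right _ _)
          have hs := hstep _ hd
          calc t₁ ^ (m + 1) * NN (f^[N₀] x - p) = t₁ * (t₁ ^ m * NN (f^[N₀] x - p)) := by ring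
            _ ≤ t₁ * NN (f^[N₀ + m] x - p) := mul_le_mul_of_nonneg_left IH ht₁0.le
            _ ≤ NN (f (f^[N₀ + m] x) - p) := hs
            _ = NN (f^[N₀ + (m + 1)] x - p) := by
                have hit : f^[N₀ + (m + 1)] x = f (f^[N₀ + m] x) := by
                  rw [show N₀ + (m + 1) = (N₀ + m) + 1 from rfl, Function.iterate_succ_apply']
                rw [hit]
      set L : ℝ := (a ^ N₀)⁻¹ * (NN (f^[N₀] x - p) / ((D + 1) * Mp)) with hLdef
      have hL0 : 0 < L := by
        rw [hLdef]
        exact mul_pos (inv_pos.mpr (pow_pos ha N₀)) (div_pos hc0 (mul_pos (by linarith : (0:ℝ) < D + 1) hMp0))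
      have hlow : ∀ m : ℕ, L ≤ (a ^ (N₀ + m))⁻¹ * ‖f^[N₀ + m] x - p‖ := by
        intro m
        have h6 : NN (f^[N₀ + m] x - p) / ((D + 1) * Mp) ≤ ‖f^[N₀ + m] x - p‖ := by
          rw [div_le_iff₀ (mul_pos (by linarith : (0:ℝ) < D + 1) hMp0)]
          have h5 : NN (f^[N₀ + m] x - p) ≤ (D + 1) * (Mp * ‖f^[N₀ + m] x - p‖) := by
            calc NN (f^[N₀ + m] x - p) ≤ D * ν (f^[N₀ + m] x - p) := hNle _
              _ ≤ (D + 1) * ν (f^[N₀ + m] x - p) :=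
                  mul_le_mul_of_nonneg_right (by linarith) (hν0 _)
              _ ≤ (D + 1) * (Mp * ‖f^[N₀ + m] x - p‖) :=
                  mul_le_mul_of_nonneg_left (hνle _) (by linarith)
          nlinarith
        have hgeom : (a ^ N₀)⁻¹ ≤ (a ^ (N₀ + m))⁻¹ * t₁ ^ m := by
          have hq : (a ^ (N₀ + m))⁻¹ * t₁ ^ m = (a ^ N₀)⁻¹ * ((a ^ m)⁻¹ * t₁ ^ m) := by
            rw [pow_add, mul_inv]; ring
          have h9 : (1 : ℝ) ≤ (a ^ m)⁻¹ * t₁ ^ m := by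
            have h10 := mul_le_mul_of_nonneg_left (pow_le_pow_left₀ ha.le ht₁a.le m)
              (inv_nonneg.mpr (pow_nonneg ha.le m))
            rwa [inv_mul_cancel₀ (pow_pos ha m).ne'] at h10
          rw [hq]
          nlinarith [inv_pos.mpr (pow_pos ha N₀)]
        calc L = (a ^ N₀)⁻¹ * (NN (f^[N₀] x - p) / ((D + 1) * Mp)) := rfl
          _ ≤ ((a ^ (N₀ + m))⁻¹ * t₁ ^ m) * (NN (f^[N₀] x - p) / ((D + 1) * Mp)) :=
              mul_le_mul_of_nonneg_right hgeom (div_nonneg (hN0 _) (mul_pos (by linarith : (0:ℝ) < D + 1) hMp0).le)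
          _ = (a ^ (N₀ + m))⁻¹ * ((t₁ ^ m * NN (f^[N₀] x - p)) / ((D + 1) * Mp)) := by ring
          _ ≤ (a ^ (N₀ + m))⁻¹ * (NN (f^[N₀ + m] x - p) / ((D + 1) * Mp)) := by
              refine mul_le_mul_of_nonneg_left ?_ (inv_nonneg.mpr (pow_nonneg ha.le _))
              gcongr
              exact hiter m
          _ ≤ (a ^ (N₀ + m))⁻¹ * ‖f^[N₀ + m] x - p‖ :=
              mul_le_mul_of_nonneg_left h6 (inv_nonneg.mpr (pow_nonneg ha.le _))
      have hev : ∀ᶠ k in atTop, (a ^ k)⁻¹ * ‖f^[k] x - p‖ < L :=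
        h2.eventually_lt_const hL0
      obtain ⟨k, hk1, hk2⟩ := (hev.and (eventually_ge_atTop N₀)).exists
      have hcontra := hlow (k - N₀)
      rw [Nat.add_sub_cancel' hk2] at hcontra
      linarith
  · rintro rfl
    exact hpmem



/-- If `a ∈ (0,1]` and `(0,a] ∩ R(α) = ∅`, then the `a`-stable set of
the analytic diffeomorphism `f` around its fixed point `p` is `{p}`. -/
theorem wStable_eq_singleton_of_Ioc_disjoint
    {K : Type*} [NontriviallyNormedField K] [IsUltrametricDist K] [CompleteSpace K]
    {E : Type*} [NormedAddCommGroup E] [NormedSpace K E] [FiniteDimensional K E]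
    {f g : E → E} (hf : AnalyticOnNhd K f Set.univ) (hg : AnalyticOnNhd K g Set.univ)
    (hgf : Function.LeftInverse g f) (hfg : Function.RightInverse g f)
    {p : E} (hfp : f p = p)
    (α : E →L[K] E) (hα : HasFDerivAt f α p)
    {Kbar : Type*} [Field Kbar] [Algebra K Kbar] [IsAlgClosure K Kbar]
    (v : AbsoluteValue Kbar ℝ) (hv : ∀ x : K, v (algebraMap K Kbar x) = ‖x‖)
    {a : ℝ} (ha : 0 < a) (ha1 : a ≤ 1)
    (hR : ∀ r ∈ Set.Ioc (0 : ℝ) a, r ∉ rSet (α : E →ₗ[K] E) Kbar v) :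
    WStable f p a = {p} :=
  main_aux hf hg hgf hfg hfp α hα v hv ha ha1 hR
end

section
/- Let E be an ultrametric Banach space over a complete ultrametric field K, U ⊆ E open, f : U → E analytic, and x ∈ U such that f'(x) is a bicontinuous linear automorphism of E. Then there exists ε > 0 such that the open ball B_ε(x) is contained in U and ‖f(z) − f(y)‖ = ‖f'(x)(z − y)‖ for all y, z ∈ B_ε(x). -/
/-- An analytic map on an open subset of an ultrametric Banach space
whose differential at `x` is a bicontinuous automorphism is, on a small ball around `x`,
an exact "isometry up to `f'(x)`": `‖f z − f y‖ = ‖f'(x)(z − y)‖`. -/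
theorem exists_ball_norm_image_sub_eq
    {K : Type*} [NontriviallyNormedField K] [IsUltrametricDist K] [CompleteSpace K]
    {E : Type*} [NormedAddCommGroup E] [NormedSpace K E] [IsUltrametricDist E]
    [CompleteSpace E]
    {U : Set E} (hU : IsOpen U) {f : E → E} (hf : AnalyticOnNhd K f U)
    {x : E} (hx : x ∈ U)
    (α : E ≃L[K] E) (hα : HasFDerivAt f (α : E →L[K] E) x) :
    ∃ ε > 0, Metric.ball x ε ⊆ U ∧
      ∀ y ∈ Metric.ball x ε, ∀ z ∈ Metric.ball x ε,
        ‖f z - f y‖ = ‖α (z - y)‖ := by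
  obtain ⟨p, hp⟩ := hf x hx
  obtain ⟨r, hpr⟩ := hp
  obtain ⟨r', hr'0, hr'⟩ := ENNReal.lt_iff_exists_nnreal_btwn.1 hpr.r_pos
  obtain ⟨C, hC⟩ := hpr.image_sub_sub_deriv_le hr'
  -- identify p 1 with α
  have hderiv : (continuousMultilinearCurryFin1 K E E (p 1) : E →L[K] E) = (α : E →L[K] E) :=
    hpr.hasFPowerSeriesAt.hasFDerivAt.unique hα
  have hp1 : ∀ v : E, (p 1 fun _ => v) = α v := by
    intro v
    have := congrArg (fun T : E →L[K] E => T v) hderiv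
    simp at this
    rw [← this]
    congr 1
    ext i
    fin_cases i
    rfl
  -- choose a radius
  obtain ⟨δU, hδU0, hδU⟩ := Metric.isOpen_iff.1 hU x hx
  set C' : ℝ := max C 0 with hC'
  set N : ℝ := ‖(α.symm : E →L[K] E)‖ with hN
  have hC'0 : 0 ≤ C' := le_max_right _ _
  have hN0 : 0 ≤ N := norm_nonneg _
  set δ : ℝ := min (min δU (r' : ℝ)) (1 / ((C' + 1) * (N + 1))) with hδ
  have hr'0n : 0 < r' := by exact_mod_cast hr'0
  have hr'0' : (0 : ℝ) < r' := hr'0n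
  have hδ0 : 0 < δ := by
    apply lt_min (lt_min hδU0 hr'0')
    positivity
  refine ⟨δ, hδ0, ?_, ?_⟩
  · exact Set.Subset.trans (Metric.ball_subset_ball (le_trans (min_le_left _ _) (min_le_left _ _))) hδU
  intro y hy z hz
  rcases eq_or_ne z y with rfl | hzy
  · simp
  -- membership in the emetric ball
  have hball : Metric.ball x δ ⊆ Metric.eball x (r' : ENNReal) := by
    intro w hw
    rw [EMetric.mem_ball, edist_dist, ← ENNReal.ofReal_coe_nnreal]
    exact (ENNReal.ofReal_lt_ofReal_iff hr'0').2
      (lt_of_lt_of_le hw (le_trans (min_le_left _ _) (min_le_right _ _)))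
  have key := hC z (hball hz) y (hball hy)
  rw [hp1] at key
  -- bound the remainder
  have hzy' : z - y ≠ 0 := sub_ne_zero_of_ne hzy
  have hαzy : α (z - y) ≠ 0 := by
    intro h
    apply hzy'
    have := congrArg α.symm h
    simpa using this
  have hαzy0 : 0 < ‖α (z - y)‖ := norm_pos_iff.2 hαzy
  have hle : ‖z - y‖ ≤ N * ‖α (z - y)‖ := by
    calc ‖z - y‖ = ‖(α.symm : E →L[K] E) (α (z - y))‖ := by simp
    _ ≤ N * ‖α (z - y)‖ := (α.symm : E →L[K] E).le_opNorm _
  have hmax : max ‖z - x‖ ‖y - x‖ ≤ δ := by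
    apply max_le
    · exact le_of_lt (by simpa [dist_eq_norm] using hz)
    · exact le_of_lt (by simpa [dist_eq_norm] using hy)
  have hrem : ‖f z - f y - α (z - y)‖ < ‖α (z - y)‖ := by
    have h1 : C * max ‖z - x‖ ‖y - x‖ * ‖z - y‖ ≤ C' * δ * (N * ‖α (z - y)‖) := by
      have : C * max ‖z - x‖ ‖y - x‖ ≤ C' * δ := by
        calc C * max ‖z - x‖ ‖y - x‖ ≤ C' * max ‖z - x‖ ‖y - x‖ :=
              mul_le_mul_of_nonneg_right (le_max_left _ _)
                (le_trans (norm_nonneg _) (le_max_left _ _))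
        _ ≤ C' * δ := mul_le_mul_of_nonneg_left hmax hC'0
      calc C * max ‖z - x‖ ‖y - x‖ * ‖z - y‖ ≤ C' * δ * ‖z - y‖ :=
            mul_le_mul_of_nonneg_right this (norm_nonneg _)
      _ ≤ C' * δ * (N * ‖α (z - y)‖) :=
            mul_le_mul_of_nonneg_left hle (by positivity)
    have h2 : C' * δ * (N * ‖α (z - y)‖) < ‖α (z - y)‖ := by
      have hδle : δ ≤ 1 / ((C' + 1) * (N + 1)) := min_le_right _ _
      have hq : C' * δ * N < 1 := by
        have hpos : (0:ℝ) < (C' + 1) * (N + 1) := by positivity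
        have : C' * δ * N ≤ C' * (1 / ((C' + 1) * (N + 1))) * N := by
          apply mul_le_mul_of_nonneg_right _ hN0
          exact mul_le_mul_of_nonneg_left hδle hC'0
        refine lt_of_le_of_lt this ?_
        rw [div_eq_inv_mul, mul_one]
        rw [show C' * ((C' + 1) * (N + 1))⁻¹ * N = (C' * N) / ((C' + 1) * (N + 1)) by
          ring]
        rw [div_lt_one hpos]
        nlinarith
      calc C' * δ * (N * ‖α (z - y)‖) = (C' * δ * N) * ‖α (z - y)‖ := by ring
      _ < 1 * ‖α (z - y)‖ := mul_lt_mul_of_pos_right hq hαzy0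
      _ = ‖α (z - y)‖ := one_mul _
    exact lt_of_le_of_lt (le_trans key h1) h2
  -- conclude by the ultrametric isosceles property
  have hne : ‖f z - f y - α (z - y)‖ ≠ ‖α (z - y)‖ := ne_of_lt hrem
  have := IsUltrametricDist.norm_add_eq_max_of_norm_ne_norm hne
  rw [sub_add_cancel] at this
  rw [this, max_eq_right (le_of_lt hrem)]
end

section
/- Let (K,|·|) be a complete ultrametric field, E a finite-dimensional K-vector space, α : E → E a K-linear map, and a ∈ (0,∞). Suppose (E_s, E_u, ‖·‖) and (F_s, F_u, ‖·‖') both witness that α is a-hyperbolic, i.e. E_s, E_u (respectively F_s, F_u) are α-invariant subspaces with E = E_s ⊕ E_u (respectively E = F_s ⊕ F_u), α restricts to a bijection of E_u (respectively of F_u), and ‖·‖ (respectively ‖·‖') is an ultrametric norm on E defining its topology with ‖x+y‖ = max{‖x‖,‖y‖} for x ∈ E_s, y ∈ E_u, operator norm of α|_{E_s} < a and operator norm of (α|_{E_u})⁻¹ < 1/a (and the analogous conditions for F_s, F_u, ‖·‖'). Then E_s = F_s and E_u = F_u. -/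
/-- `N` is an ultrametric norm on the `K`-vector space `E`. -/
def IsUltraNorm (K : Type*) [NormedField K] {E : Type*} [AddCommGroup E] [Module K E]
    (N : E → ℝ) : Prop :=
  (∀ x : E, 0 ≤ N x) ∧ (∀ x : E, N x = 0 ↔ x = 0) ∧
    (∀ (c : K) (x : E), N (c • x) = ‖c‖ * N x) ∧
    ∀ x y : E, N (x + y) ≤ max (N x) (N y)

/-- The norm `N` defines the canonical topology of `E`, i.e. it is equivalent
to the ambient norm. -/
def DefinesTopology {E : Type*} [NormedAddCommGroup E] (N : E → ℝ) : Prop :=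
  ∃ c > 0, ∃ C > 0, ∀ x : E, c * ‖x‖ ≤ N x ∧ N x ≤ C * ‖x‖

/-- `(Es, Eu, N)` witnesses that `α` is `a`-hyperbolic: `Es`, `Eu` are `α`-invariant with
`E = Es ⊕ Eu`, `α` restricts to a bijection of `Eu`, and `N` is an ultrametric norm
defining the topology of `E`, compatible with the splitting, for which the operator norm
of `α` on `Es` is `< a` and the operator norm of the inverse of `α` on `Eu` is `< 1/a`. -/
def HyperbolicWitness {K : Type*} [NormedField K]
    {E : Type*} [NormedAddCommGroup E] [NormedSpace K E]
    (α : E →ₗ[K] E) (a : ℝ) (Es Eu : Submodule K E) (N : E → ℝ) : Prop :=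
  (∀ x ∈ Es, α x ∈ Es) ∧ (∀ x ∈ Eu, α x ∈ Eu) ∧
  IsCompl Es Eu ∧
  Set.BijOn ⇑α (Eu : Set E) (Eu : Set E) ∧
  IsUltraNorm K N ∧ DefinesTopology N ∧
  (∀ x ∈ Es, ∀ y ∈ Eu, N (x + y) = max (N x) (N y)) ∧
  (∃ b, b < a ∧ ∀ x ∈ Es, N (α x) ≤ b * N x) ∧
  (∃ b, a < b ∧ ∀ y ∈ Eu, b * N y ≤ N (α y))

section Aux

variable {K : Type*} [NormedField K]
    {E : Type*} [NormedAddCommGroup E] [NormedSpace K E]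
    {α : E →ₗ[K] E} {a : ℝ} {Es Eu : Submodule K E} {N : E → ℝ}

/-- Iterates preserve an invariant submodule. -/
lemma hw_pow_mem (hEs : ∀ x ∈ Es, α x ∈ Es) :
    ∀ (n : ℕ) (x : E), x ∈ Es → (α ^ n) x ∈ Es := by
  intro n
  induction n with
  | zero => intro x hx; simpa using hx
  | succ n ih =>
      intro x hx
      rw [pow_succ, Module.End.mul_apply]
      exact ih _ (hEs x hx)

/-- Iterated contraction bound on the stable subspace. -/
lemma hw_stable_pow (hN0 : ∀ x : E, 0 ≤ N x) (hEs : ∀ x ∈ Es, α x ∈ Es)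
    {b : ℝ} (hb0 : 0 ≤ b) (hs : ∀ x ∈ Es, N (α x) ≤ b * N x) :
    ∀ (n : ℕ) (x : E), x ∈ Es → N ((α ^ n) x) ≤ b ^ n * N x := by
  intro n
  induction n with
  | zero => intro x hx; simp
  | succ n ih =>
      intro x hx
      have h1 : N ((α ^ (n + 1)) x) = N ((α ^ n) (α x)) := by
        rw [pow_succ, Module.End.mul_apply]
      rw [h1]
      calc N ((α ^ n) (α x)) ≤ b ^ n * N (α x) := ih _ (hEs x hx)
        _ ≤ b ^ n * (b * N x) :=
            mul_le_mul_of_nonneg_left (hs x hx) (pow_nonneg hb0 n)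
        _ = b ^ (n + 1) * N x := by ring

/-- Iterated expansion bound on the unstable subspace. -/
lemma hw_unstable_pow (hEu : ∀ x ∈ Eu, α x ∈ Eu)
    {b : ℝ} (hb0 : 0 ≤ b) (hu : ∀ y ∈ Eu, b * N y ≤ N (α y)) :
    ∀ (n : ℕ) (y : E), y ∈ Eu → b ^ n * N y ≤ N ((α ^ n) y) := by
  intro n
  induction n with
  | zero => intro y hy; simp
  | succ n ih =>
      intro y hy
      have h1 : N ((α ^ (n + 1)) y) = N ((α ^ n) (α y)) := by
        rw [pow_succ, Module.End.mul_apply]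
      rw [h1]
      calc b ^ (n + 1) * N y = b ^ n * (b * N y) := by ring
        _ ≤ b ^ n * N (α y) :=
            mul_le_mul_of_nonneg_left (hu y hy) (pow_nonneg hb0 n)
        _ ≤ N ((α ^ n) (α y)) := ih _ (hEu y hy)

/-- Characterization of the stable subspace: `x ∈ Es` iff the forward orbit of `x`
grows slower than `a ^ n`. -/
lemma hw_mem_stable_iff (ha : 0 < a) (hw : HyperbolicWitness α a Es Eu N) (x : E) :
    x ∈ Es ↔ ∃ C : ℝ, ∀ n : ℕ, ‖(α ^ n) x‖ ≤ C * a ^ n := by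
  obtain ⟨hEs, hEu, hcompl, hbij, ⟨hN0, hNzero, hNsmul, hNadd⟩,
    ⟨c, hc, C₂, hC₂, hnorm⟩, hmax, ⟨b, hba, hs⟩, ⟨b', hab', hu⟩⟩ := hw
  constructor
  · intro hx
    refine ⟨N x / c, fun n => ?_⟩
    set b0 : ℝ := max b 0 with hb0def
    have hb0 : 0 ≤ b0 := le_max_right _ _
    have hb0a : b0 ≤ a := max_le hba.le ha.le
    have hs' : ∀ y ∈ Es, N (α y) ≤ b0 * N y := fun y hy =>
      (hs y hy).trans (mul_le_mul_of_nonneg_right (le_max_left _ _) (hN0 y))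
    have h1 : N ((α ^ n) x) ≤ b0 ^ n * N x := hw_stable_pow hN0 hEs hb0 hs' n x hx
    have h2 : c * ‖(α ^ n) x‖ ≤ N ((α ^ n) x) := (hnorm _).1
    have h3 : b0 ^ n ≤ a ^ n := pow_le_pow_left₀ hb0 hb0a n
    have : c * ‖(α ^ n) x‖ ≤ a ^ n * N x :=
      h2.trans (h1.trans (mul_le_mul_of_nonneg_right h3 (hN0 x)))
    rw [div_mul_eq_mul_div, le_div_iff₀ hc]
    nlinarith [this]
  · rintro ⟨C, hC⟩
    have hC0 : 0 ≤ C := by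
      have := hC 0
      simp only [pow_zero, mul_one, pow_zero, Module.End.one_apply] at this
      exact (norm_nonneg x).trans this
    have hxtop : x ∈ Es ⊔ Eu := by
      rw [hcompl.sup_eq_top]; trivial
    obtain ⟨s, hsmem, u, humem, rfl⟩ := Submodule.mem_sup.mp hxtop
    have hb'0 : 0 < b' := ha.trans hab'
    -- show u = 0
    have key : ∀ n : ℕ, N u ≤ C₂ * C * (a / b') ^ n := by
      intro n
      have h1 : b' ^ n * N u ≤ N ((α ^ n) u) := hw_unstable_pow hEu hb'0.le hu n u humem
      have h2 : N ((α ^ n) (s + u)) = max (N ((α ^ n) s)) (N ((α ^ n) u)) := by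
        rw [map_add]
        exact hmax _ (hw_pow_mem hEs n s hsmem) _ (hw_pow_mem hEu n u humem)
      have h3 : N ((α ^ n) u) ≤ N ((α ^ n) (s + u)) := h2.ge.trans' (le_max_right _ _)
      have h4 : N ((α ^ n) (s + u)) ≤ C₂ * (C * a ^ n) :=
        (hnorm _).2.trans (mul_le_mul_of_nonneg_left (hC n) hC₂.le)
      have h5 : b' ^ n * N u ≤ C₂ * C * a ^ n := by
        calc b' ^ n * N u ≤ C₂ * (C * a ^ n) := h1.trans (h3.trans h4)
          _ = C₂ * C * a ^ n := by ring
      have hbn : (0:ℝ) < b' ^ n := pow_pos hb'0 n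
      rw [div_pow, ← mul_div_assoc, le_div_iff₀ hbn]
      nlinarith [h5]
    have htend : Filter.Tendsto (fun n : ℕ => C₂ * C * (a / b') ^ n)
        Filter.atTop (nhds 0) := by
      have h01 : |a / b'| < 1 := by
        rw [abs_of_nonneg (div_nonneg ha.le hb'0.le)]
        rw [div_lt_one hb'0]
        exact hab'
      have := tendsto_pow_atTop_nhds_zero_of_abs_lt_one h01
      simpa using this.const_mul (C₂ * C)
    have hNu : N u ≤ 0 := ge_of_tendsto' htend key
    have : u = 0 := (hNzero u).mp (le_antisymm hNu (hN0 u))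
    rw [this, add_zero]
    exact hsmem

/-- Characterization of the unstable subspace: `x ∈ Eu` iff `x` has a backward orbit
whose growth is dominated by `a ^ (-n)`. -/
lemma hw_mem_unstable_iff (ha : 0 < a) (hw : HyperbolicWitness α a Es Eu N) (x : E) :
    x ∈ Eu ↔ ∃ f : ℕ → E, f 0 = x ∧ (∀ n, α (f (n + 1)) = f n) ∧
      ∃ C : ℝ, ∀ n : ℕ, a ^ n * ‖f n‖ ≤ C := by
  obtain ⟨hEs, hEu, hcompl, hbij, ⟨hN0, hNzero, hNsmul, hNadd⟩,
    ⟨c, hc, C₂, hC₂, hnorm⟩, hmax, ⟨b, hba, hs⟩, ⟨b', hab', hu⟩⟩ := hw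
  have hb'0 : 0 < b' := ha.trans hab'
  constructor
  · intro hx
    have hsurj : ∀ y ∈ Eu, ∃ z, z ∈ (Eu : Set E) ∧ α z = y := fun y hy => hbij.surjOn hy
    choose g hgmem hgeq using fun y : Eu => hsurj y.1 y.2
    let G : Eu → Eu := fun y => ⟨g y, hgmem y⟩
    let f : ℕ → E := fun n => ((G^[n] ⟨x, hx⟩ : Eu) : E)
    have hf0 : f 0 = x := rfl
    have hfstep : ∀ n, α (f (n + 1)) = f n := by
      intro n
      show α ((G^[n + 1] ⟨x, hx⟩ : Eu) : E) = _
      rw [Function.iterate_succ_apply']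
      exact hgeq (G^[n] ⟨x, hx⟩)
    have hfmem : ∀ n, f n ∈ Eu := fun n => (G^[n] ⟨x, hx⟩).2
    -- N (f n) decays: b' ^ n * N (f n) ≤ N x
    have hdecay : ∀ n, b' ^ n * N (f n) ≤ N x := by
      intro n
      induction n with
      | zero => simp [hf0]
      | succ n ih =>
          have h1 : b' * N (f (n + 1)) ≤ N (α (f (n + 1))) := hu _ (hfmem (n + 1))
          rw [hfstep n] at h1
          calc b' ^ (n + 1) * N (f (n + 1)) = b' ^ n * (b' * N (f (n + 1))) := by ring
            _ ≤ b' ^ n * N (f n) := mul_le_mul_of_nonneg_left h1 (pow_nonneg hb'0.le n)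
            _ ≤ N x := ih
    refine ⟨f, hf0, hfstep, N x / c, fun n => ?_⟩
    have h2 : c * ‖f n‖ ≤ N (f n) := (hnorm _).1
    have h3 : N (f n) ≤ N x / b' ^ n := by
      rw [le_div_iff₀ (pow_pos hb'0 n), mul_comm]
      exact hdecay n
    have h4 : a ^ n ≤ b' ^ n := pow_le_pow_left₀ ha.le hab'.le n
    have h5 : c * (a ^ n * ‖f n‖) ≤ N x := by
      have hfn0 : 0 ≤ ‖f n‖ := norm_nonneg _
      have : c * ‖f n‖ ≤ N x / b' ^ n := h2.trans h3
      have h6 : b' ^ n * (c * ‖f n‖) ≤ N x := by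
        rw [← le_div_iff₀' (pow_pos hb'0 n)]
        exact this
      calc c * (a ^ n * ‖f n‖) = a ^ n * (c * ‖f n‖) := by ring
        _ ≤ b' ^ n * (c * ‖f n‖) :=
            mul_le_mul_of_nonneg_right h4 (by positivity)
        _ ≤ N x := h6
    rw [le_div_iff₀ hc] at *
    nlinarith [h5]
  · rintro ⟨f, hf0, hfstep, C, hC⟩
    have hC0 : 0 ≤ C := by
      have := hC 0
      simp only [pow_zero, one_mul] at this
      exact (norm_nonneg _).trans this
    -- decompose each f n
    have hdec : ∀ n : ℕ, ∃ s ∈ Es, ∃ u ∈ Eu, s + u = f n := by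
      intro n
      have : f n ∈ Es ⊔ Eu := by rw [hcompl.sup_eq_top]; trivial
      exact Submodule.mem_sup.mp this
    choose s hsmem rest using hdec
    choose u humem hsum using rest
    have hstep : ∀ n, α (s (n + 1)) = s n := by
      intro n
      have h1 : α (s (n + 1)) + α (u (n + 1)) = s n + u n := by
        rw [← map_add, hsum, hfstep, ← hsum]
      have h2 : s n - α (s (n + 1)) = α (u (n + 1)) - u n := by
        rw [sub_eq_sub_iff_add_eq_add, ← h1]; abel
      have h3 : s n - α (s (n + 1)) ∈ Es := sub_mem (hsmem n) (hEs _ (hsmem (n + 1)))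
      have h4 : s n - α (s (n + 1)) ∈ Eu := by
        rw [h2]; exact sub_mem (hEu _ (humem (n + 1))) (humem n)
      have h5 : s n - α (s (n + 1)) = 0 :=
        (Submodule.disjoint_def.mp hcompl.disjoint) _ h3 h4
      exact (sub_eq_zero.mp h5).symm
    have hiter : ∀ n : ℕ, (α ^ n) (s n) = s 0 := by
      intro n
      induction n with
      | zero => simp
      | succ n ih =>
          have : (α ^ (n + 1)) (s (n + 1)) = (α ^ n) (α (s (n + 1))) := by
            rw [pow_succ, Module.End.mul_apply]
          rw [this, hstep n, ih]
    set b0 : ℝ := max b 0 with hb0def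
    have hb0 : 0 ≤ b0 := le_max_right _ _
    have hb0a : b0 < a := max_lt hba ha
    have hs' : ∀ y ∈ Es, N (α y) ≤ b0 * N y := fun y hy =>
      (hs y hy).trans (mul_le_mul_of_nonneg_right (le_max_left _ _) (hN0 y))
    have key : ∀ n : ℕ, N (s 0) ≤ C₂ * C * (b0 / a) ^ n := by
      intro n
      have h1 : N (s 0) ≤ b0 ^ n * N (s n) := by
        rw [← hiter n]
        exact hw_stable_pow hN0 hEs hb0 hs' n (s n) (hsmem n)
      have h2 : N (s n) ≤ N (f n) := by
        rw [← hsum n, hmax _ (hsmem n) _ (humem n)]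
        exact le_max_left _ _
      have h3 : N (f n) ≤ C₂ * ‖f n‖ := (hnorm _).2
      have h4 : ‖f n‖ ≤ C / a ^ n := by
        rw [le_div_iff₀ (pow_pos ha n), mul_comm]
        exact hC n
      have h5 : N (s 0) ≤ b0 ^ n * (C₂ * (C / a ^ n)) := by
        calc N (s 0) ≤ b0 ^ n * N (s n) := h1
          _ ≤ b0 ^ n * (C₂ * (C / a ^ n)) := by
              apply mul_le_mul_of_nonneg_left _ (pow_nonneg hb0 n)
              exact h2.trans (h3.trans (mul_le_mul_of_nonneg_left h4 hC₂.le))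
      calc N (s 0) ≤ b0 ^ n * (C₂ * (C / a ^ n)) := h5
        _ = C₂ * C * (b0 / a) ^ n := by
            rw [div_pow]; field_simp
    have htend : Filter.Tendsto (fun n : ℕ => C₂ * C * (b0 / a) ^ n)
        Filter.atTop (nhds 0) := by
      have h01 : |b0 / a| < 1 := by
        rw [abs_of_nonneg (div_nonneg hb0 ha.le), div_lt_one ha]
        exact hb0a
      have := tendsto_pow_atTop_nhds_zero_of_abs_lt_one h01
      simpa using this.const_mul (C₂ * C)
    have hNs : N (s 0) ≤ 0 := ge_of_tendsto' htend key
    have hs0 : s 0 = 0 := (hNzero _).mp (le_antisymm hNs (hN0 _))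
    have : x = u 0 := by
      rw [← hf0, ← hsum 0, hs0, zero_add]
    rw [this]
    exact humem 0

end Aux

/-- In finite dimension, the stable and unstable subspaces witnessing
`a`-hyperbolicity of `α` are uniquely determined. -/
theorem hyperbolicWitness_unique
    {K : Type*} [NontriviallyNormedField K] [IsUltrametricDist K] [CompleteSpace K]
    {E : Type*} [NormedAddCommGroup E] [NormedSpace K E] [FiniteDimensional K E]
    (α : E →ₗ[K] E) {a : ℝ} (ha : 0 < a)
    {Es Eu Fs Fu : Submodule K E} {N N' : E → ℝ}
    (h : HyperbolicWitness α a Es Eu N) (h' : HyperbolicWitness α a Fs Fu N') :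
    Es = Fs ∧ Eu = Fu := by
  constructor
  · ext x
    rw [hw_mem_stable_iff ha h x, hw_mem_stable_iff ha h' x]
  · ext x
    rw [hw_mem_unstable_iff ha h x, hw_mem_unstable_iff ha h' x]
end
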